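/- In the case λ = 0, the Newton sequence t₀ = 0, t_{k+1} = t_k - h(t_k)/h'(t_k) satisfies t* - t_{k+1} ≤ (1/2)(t* - t_k) for all k, i.e., converges Q-linearly to t*; if moreover h'(t*) < 0, then t* - t_{k+1} ≤ (D⁻h'(t*)/(-2h'(t*)))(t* - t_k)², i.e., converges Q-quadratically. -/

import Mathlib

open Set Filter

/-- For `λ = 0` the Newton sequence converges Q-linearly to `t*`:
`t* - t_{k+1} ≤ (1/2)(t* - t_k)`; if moreover `h'(t*) < 0` it converges
Q-quadratically: `t* - t_{k+1} ≤ (D⁻h'(t*)/(-2h'(t*)))(t* - t_k)²`. -/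
theorem scalar_sequence_rates (R β : ℝ) (hR : 0 < R) (hβ : 0 < β)
    (f f' : ℝ → ℝ)
    (hder : ∀ t ∈ Ico (0:ℝ) R, HasDerivWithinAt f (f' t) (Ico (0:ℝ) R) t)
    (hf0 : f 0 = 0) (hf'0 : f' 0 = -1)
    (hconv : ConvexOn ℝ (Ico (0:ℝ) R) f')
    (hmono : StrictMonoOn f' (Ico (0:ℝ) R))
    (h : ℝ → ℝ) (hh : h = fun t => β + f t)
    (tstar : ℝ) (htstar : tstar ∈ Ioo (0:ℝ) R) (hz : h tstar = 0)
    (hmin : ∀ t ∈ Ioo (0:ℝ) R, h t = 0 → tstar ≤ t)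
    (hneg : ∀ t ∈ Ico (0:ℝ) tstar, f' t < 0)
    (D : ℝ) (hD : HasDerivWithinAt f' D (Iio tstar) tstar)
    (t : ℕ → ℝ) (ht0 : t 0 = 0)
    (htk : ∀ k, t (k + 1) = t k - h (t k) / f' (t k)) :
    (∀ k, tstar - t (k + 1) ≤ (1/2) * (tstar - t k)) ∧
    (f' tstar < 0 →
      ∀ k, tstar - t (k + 1) ≤ (D / (-2 * f' tstar)) * (tstar - t k) ^ 2) := by
  subst hh
  obtain ⟨ht0p, htR⟩ := htstar
  simp only [] at hz htk
  have hstarIco : tstar ∈ Ico (0:ℝ) R := ⟨ht0p.le, htR⟩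
  have hsub : Icc (0:ℝ) tstar ⊆ Ico (0:ℝ) R := fun y hy => ⟨hy.1, lt_of_le_of_lt hy.2 htR⟩
  -- f' tstar ≤ 0
  have hf'star_le : f' tstar ≤ 0 := by
    have hc : Tendsto f' (nhdsWithin tstar (Iio tstar)) (nhds (f' tstar)) :=
      hD.continuousWithinAt
    refine le_of_tendsto hc ?_
    filter_upwards [Ioo_mem_nhdsLT ht0p] with u hu
    exact (hneg u ⟨hu.1.le, hu.2⟩).le
  -- tangent line bound
  have claim1 : ∀ x ∈ Icc (0:ℝ) tstar, (β + f x) + f' x * (tstar - x) ≤ 0 := by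
    intro x hx
    have hxIco : x ∈ Ico (0:ℝ) R := hsub hx
    have hsub2 : Icc x tstar ⊆ Ico (0:ℝ) R := fun y hy => hsub ⟨hx.1.trans hy.1, hy.2⟩
    have hmonoOn : MonotoneOn (fun s => f s - f' x * s) (Icc x tstar) := by
      apply monotoneOn_of_hasDerivWithinAt_nonneg (convex_Icc _ _)
        (f' := fun s => f' s - f' x)
      · intro y hy
        exact (((hder y (hsub2 hy)).sub
          ((hasDerivWithinAt_id y _).const_mul (f' x))).continuousWithinAt).mono hsub2
      · intro y hy
        rw [interior_Icc] at hy ⊢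
        have hyI : y ∈ Ico (0:ℝ) R := hsub2 (Ioo_subset_Icc_self hy)
        have hss : Ioo x tstar ⊆ Ico (0:ℝ) R := fun z hz => hsub2 (Ioo_subset_Icc_self hz)
        have h1 := (((hder y hyI).sub ((hasDerivWithinAt_id y _).const_mul (f' x))).mono hss)
        simp only [mul_one] at h1
        exact h1
      · intro y hy
        rw [interior_Icc] at hy
        have := hmono.monotoneOn hxIco (hsub2 (Ioo_subset_Icc_self hy)) hy.1.le
        linarith
    have key := hmonoOn (left_mem_Icc.2 hx.2) (right_mem_Icc.2 hx.2) hx.2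
    simp only [] at key
    nlinarith [key, hz]
  -- trapezoid bound
  have claim2 : ∀ x ∈ Ico (0:ℝ) tstar,
      0 ≤ (β + f x) + (f' x + f' tstar) / 2 * (tstar - x) := by
    intro x hx
    have hxIco : x ∈ Ico (0:ℝ) R := ⟨hx.1, hx.2.trans htR⟩
    have he : 0 < tstar - x := by linarith [hx.2]
    have hene : tstar - x ≠ 0 := ne_of_gt he
    set c : ℝ := (f' tstar - f' x) / (2 * (tstar - x)) with hc
    have hsub2 : Icc x tstar ⊆ Ico (0:ℝ) R := fun y hy => hsub ⟨hx.1.trans hy.1, hy.2⟩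
    have hmonoOn : MonotoneOn (fun s => f' x * s + c * (s - x)^2 - f s) (Icc x tstar) := by
      apply monotoneOn_of_hasDerivWithinAt_nonneg (convex_Icc _ _)
        (f' := fun s => f' x + c * (2 * (s - x)) - f' s)
      · intro y hy
        exact (((((hasDerivWithinAt_id y _).const_mul (f' x)).add
          ((((hasDerivWithinAt_id y _).sub_const x).pow 2).const_mul c)).sub
          (hder y (hsub2 hy))).continuousWithinAt).mono hsub2
      · intro y hy
        rw [interior_Icc] at hy ⊢
        have hyI : y ∈ Ico (0:ℝ) R := hsub2 (Ioo_subset_Icc_self hy)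
        have hss : Ioo x tstar ⊆ Ico (0:ℝ) R := fun z hz => hsub2 (Ioo_subset_Icc_self hz)
        have h1 := ((((hasDerivWithinAt_id y (Ioo x tstar)).const_mul (f' x)).add
          ((((hasDerivWithinAt_id y (Ioo x tstar)).sub_const x).pow 2).const_mul c)).sub
          ((hder y hyI).mono hss))
        exact h1.congr_deriv (by norm_num)
      · intro y hy
        rw [interior_Icc] at hy
        have hyI : y ∈ Ico (0:ℝ) R := hsub2 (Ioo_subset_Icc_self hy)
        set μ := (y - x) / (tstar - x) with hμ
        have hl : (0:ℝ) ≤ μ := by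
          rw [hμ]
          apply div_nonneg (by linarith [hy.1]) he.le
        have hl1 : μ ≤ 1 := by
          rw [hμ, div_le_one he]; linarith [hy.2]
        have hcomb := hconv.2 hxIco hstarIco (by linarith : (0:ℝ) ≤ 1 - μ) hl
          (by ring : (1 - μ) + μ = 1)
        have hyeq : (1 - μ) • x + μ • tstar = y := by
          rw [smul_eq_mul, smul_eq_mul, hμ]
          field_simp
          ring
        rw [hyeq] at hcomb
        simp only [smul_eq_mul] at hcomb
        have hcy : c * (2 * (y - x)) = μ * (f' tstar - f' x) := by
          rw [hc, hμ]; field_simp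
        linarith [hcomb, hcy]
    have hxle : x ≤ tstar := by linarith [hx.2]
    have key := hmonoOn (left_mem_Icc.2 hxle) (right_mem_Icc.2 hxle) hxle
    simp only [] at key
    have hce : c * (tstar - x)^2 = (f' tstar - f' x) * (tstar - x) / 2 := by
      rw [hc]; field_simp
    nlinarith [key, hce, hz]
  -- positivity of h on [0, tstar)
  have claim3 : ∀ x ∈ Ico (0:ℝ) tstar, 0 < β + f x := by
    intro x hx
    have hanti : StrictAntiOn (fun s => β + f s) (Icc (0:ℝ) tstar) := by
      apply strictAntiOn_of_deriv_neg (convex_Icc _ _)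
      · intro y hy
        exact (((hder y (hsub hy)).const_add β).continuousWithinAt).mono hsub
      · intro y hy
        rw [interior_Icc] at hy
        have hda : HasDerivAt (fun s => β + f s) (f' y) y := by
          have hmem : Ico (0:ℝ) R ∈ nhds y :=
            Ico_mem_nhds hy.1 (hy.2.trans htR)
          exact ((hder y (hsub (Ioo_subset_Icc_self hy))).hasDerivAt hmem).const_add β
        rw [hda.deriv]
        exact hneg y ⟨hy.1.le, hy.2⟩
    have key := hanti ⟨hx.1, hx.2.le⟩ (right_mem_Icc.2 ht0p.le) hx.2
    simp only [] at key
    linarith [key, hz]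
  -- invariant
  have claim4 : ∀ k, t k ∈ Icc (0:ℝ) tstar := by
    intro k
    induction k with
    | zero => rw [ht0]; exact ⟨le_refl _, ht0p.le⟩
    | succ k ih =>
      rcases eq_or_lt_of_le ih.2 with heq | hlt
      · rw [htk k, heq, hz]
        simp only [zero_div, sub_zero]
        exact ⟨ht0p.le, le_refl _⟩
      · have hxI : t k ∈ Ico (0:ℝ) tstar := ⟨ih.1, hlt⟩
        have hfn : f' (t k) < 0 := hneg _ hxI
        have hpos : 0 < β + f (t k) := claim3 _ hxI
        constructor
        · rw [htk k]
          have hdn : (β + f (t k)) / f' (t k) < 0 := div_neg_of_pos_of_neg hpos hfn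
          linarith [ih.1]
        · rw [htk k]
          have h1 := claim1 _ ⟨ih.1, hlt.le⟩
          have hge : -(tstar - t k) ≤ (β + f (t k)) / f' (t k) := by
            rw [le_div_iff_of_neg hfn]
            nlinarith [h1]
          linarith
  -- linear rate
  have linear : ∀ k, tstar - t (k + 1) ≤ (1/2) * (tstar - t k) := by
    intro k
    rcases eq_or_lt_of_le (claim4 k).2 with heq | hlt
    · rw [htk k, heq, hz]
      simp
    · have hxI : t k ∈ Ico (0:ℝ) tstar := ⟨(claim4 k).1, hlt⟩
      have hfn : f' (t k) < 0 := hneg _ hxI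
      have h2 := claim2 _ hxI
      rw [htk k]
      have hq : (β + f (t k)) / f' (t k) ≤ -((tstar - t k)/2) := by
        rw [div_le_iff_of_neg hfn]
        nlinarith [h2, hf'star_le, hfn]
      linarith
  refine ⟨linear, ?_⟩
  intro hfs k
  rcases eq_or_lt_of_le (claim4 k).2 with heq | hlt
  · rw [htk k, heq, hz]
    simp
  · have hxI : t k ∈ Ico (0:ℝ) tstar := ⟨(claim4 k).1, hlt⟩
    have hxIco : t k ∈ Ico (0:ℝ) R := ⟨hxI.1, hxI.2.trans htR⟩
    have hfn : f' (t k) < 0 := hneg _ hxI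
    have he : 0 < tstar - t k := by linarith
    have hfx_lt : f' (t k) < f' tstar := hmono hxIco hstarIco hlt
    -- slope bound
    have hslope : f' tstar - f' (t k) ≤ D * (tstar - t k) := by
      have htend : Tendsto (slope f' tstar)
          (nhdsWithin tstar (Iio tstar \ {tstar})) (nhds D) :=
        hasDerivWithinAt_iff_tendsto_slope.1 hD
      rw [diff_singleton_eq_self (notMem_Iio.2 le_rfl)] at htend
      have hbound : slope f' tstar (t k) ≤ D := by
        refine ge_of_tendsto htend ?_
        filter_upwards [Ioo_mem_nhdsLT hlt] with u hu
        have hu' : u ∈ Ico (0:ℝ) R := ⟨hxI.1.trans hu.1.le, hu.2.trans htR⟩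
        have := hconv.secant_mono hstarIco hxIco hu'
          (ne_of_lt hlt) (ne_of_lt hu.2) hu.1.le
        simp only [slope_def_field]
        exact this
      rw [slope_def_field] at hbound
      rw [div_le_iff_of_neg (by linarith : t k - tstar < 0)] at hbound
      nlinarith [hbound]
    rw [htk k]
    have hfne : f' (t k) ≠ 0 := ne_of_lt hfn
    have h2 := claim2 _ hxI
    rw [show β + f (t k) = ((β + f (t k)) / f' (t k)) * f' (t k) from
      (div_mul_cancel₀ _ hfne).symm] at h2
    set q := (β + f (t k)) / f' (t k) with hqdef
    rw [div_mul_eq_mul_div, le_div_iff₀ (by linarith : (0:ℝ) < -2 * f' tstar)]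
    nlinarith [h2,
      mul_nonneg h2 (by linarith : (0:ℝ) ≤ -f' tstar),
      mul_nonneg (mul_nonneg he.le (by linarith : (0:ℝ) ≤ -f' (t k)))
        (by linarith : (0:ℝ) ≤ D * (tstar - t k) - (f' tstar - f' (t k))),
      mul_nonneg he.le (sq_nonneg (f' tstar - f' (t k)))]
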